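/- arXiv:2010.00232 — 5 statements merged into one kernel-verified Lean document; each statement's English description precedes it below -/
import Mathlib

section
/- The set of basic moves is a Markov basis for two-way tables with fixed margins: for any two nonnegative integer k×k tables n' and n'' with the same row sums and the same column sums, there exists a finite sequence of basic moves m^(1),...,m^(Q) such that n'' = n' + Σ_{j=1}^Q m^(j) and every partial sum n' + Σ_{j=1}^q m^(j) (for q = 1,...,Q) is entrywise nonnegative. -/
/-- The basic move for two-way tables with `+1` at `(i,j)` and `(i',j')` and `-1`
at `(i,j')` and `(i',j)`, where `i ≠ i'` and `j ≠ j'`. -/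
def basicMove {k : ℕ} (i i' j j' : Fin k) : Fin k × Fin k → ℤ := fun p =>
  (if p = (i, j) then 1 else 0) + (if p = (i', j') then 1 else 0)
    - (if p = (i, j') then 1 else 0) - (if p = (i', j) then 1 else 0)

/-- A table `m` is a basic move if it arises from distinct rows `i ≠ i'` and
distinct columns `j ≠ j'` as above. -/
def IsBasicMove {k : ℕ} (m : Fin k × Fin k → ℤ) : Prop :=
  ∃ i i' j j' : Fin k, i ≠ i' ∧ j ≠ j' ∧ m = basicMove i i' j j'

lemma exists_gt_aux {α : Type*} [Fintype α] {f g : α → ℕ}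
    (h : ∑ x, f x = ∑ x, g x) {a : α} (hlt : f a < g a) : ∃ b, g b < f b := by
  by_contra hc
  push_neg at hc
  have : ∑ x, f x < ∑ x, g x :=
    Finset.sum_lt_sum (fun b _ => hc b) ⟨a, Finset.mem_univ a, hlt⟩
  omega

lemma sum_filter_succ {Q : ℕ} (g : Fin (Q + 1) → ℤ) (q : ℕ) :
    ∑ t ∈ Finset.univ.filter (fun t : Fin (Q + 1) => (t : ℕ) < q + 1), g t
      = g 0 + ∑ t ∈ Finset.univ.filter (fun t : Fin Q => (t : ℕ) < q), g t.succ := by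
  rw [Finset.sum_filter, Finset.sum_filter, Fin.sum_univ_succ]
  simp [Fin.val_succ, Nat.succ_lt_succ_iff]

lemma markov_aux {k : ℕ} (d : ℕ) : ∀ (n' n'' : Fin k × Fin k → ℕ),
    (∑ p : Fin k × Fin k, ((n'' p : ℤ) - n' p).natAbs) = d →
    (∀ i : Fin k, ∑ j : Fin k, n' (i, j) = ∑ j : Fin k, n'' (i, j)) →
    (∀ j : Fin k, ∑ i : Fin k, n' (i, j) = ∑ i : Fin k, n'' (i, j)) →
    ∃ (Q : ℕ) (m : Fin Q → (Fin k × Fin k → ℤ)),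
      (∀ t : Fin Q, IsBasicMove (m t)) ∧
      (∀ p : Fin k × Fin k, (n'' p : ℤ) = (n' p : ℤ) + ∑ t : Fin Q, m t p) ∧
      (∀ q : ℕ, q ≤ Q → ∀ p : Fin k × Fin k,
        0 ≤ (n' p : ℤ) + ∑ t ∈ Finset.univ.filter (fun t : Fin Q => (t : ℕ) < q), m t p) := by
  induction d using Nat.strong_induction_on with
  | _ d IH =>
  intro n' n'' hd hrow hcol
  by_cases hEq : ∀ p, n' p = n'' p
  · refine ⟨0, Fin.elim0, fun t => t.elim0, fun p => by simp [hEq p], fun q hq p => by simp⟩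
  · push_neg at hEq
    obtain ⟨p0, hp0⟩ := hEq
    -- find a cell (i,j) with n'' (i,j) < n' (i,j)
    have hcell : ∃ i j, n'' (i, j) < n' (i, j) := by
      rcases Nat.lt_or_ge (n' p0) (n'' p0) with h | h
      · obtain ⟨b, hb⟩ := exists_gt_aux (f := fun i => n' (i, p0.2)) (g := fun i => n'' (i, p0.2))
          (hcol p0.2) (a := p0.1) (by simpa using h)
        exact ⟨b, p0.2, hb⟩
      · exact ⟨p0.1, p0.2, by simp only [Prod.mk.eta]; omega⟩
    obtain ⟨i, j, hij⟩ := hcell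
    obtain ⟨j', hj'⟩ := exists_gt_aux (f := fun j0 => n'' (i, j0)) (g := fun j0 => n' (i, j0))
      (hrow i).symm (a := j) hij
    obtain ⟨i', hi'⟩ := exists_gt_aux (f := fun i0 => n' (i0, j')) (g := fun i0 => n'' (i0, j'))
      (hcol j') (a := i) hj'
    have hii' : i ≠ i' := by rintro rfl; omega
    have hjj' : j ≠ j' := by rintro rfl; omega
    set mv := basicMove i i' j' j with hmv
    -- values of mv at the four cells, and 0 elsewhere
    have hmv1 : mv (i, j) = -1 := by
      simp [hmv, basicMove, Prod.mk.injEq, hjj', hii', hii'.symm, hjj'.symm]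
    have hmv2 : mv (i', j') = -1 := by
      simp [hmv, basicMove, Prod.mk.injEq, hjj', hii', hii'.symm, hjj'.symm]
    have hmv3 : mv (i, j') = 1 := by
      simp [hmv, basicMove, Prod.mk.injEq, hjj', hii', hii'.symm, hjj'.symm]
    have hmv4 : mv (i', j) = 1 := by
      simp [hmv, basicMove, Prod.mk.injEq, hjj', hii', hii'.symm, hjj'.symm]
    have hmv0 : ∀ p, p ≠ (i, j) → p ≠ (i', j') → p ≠ (i, j') → p ≠ (i', j) → mv p = 0 := by
      intro p h1 h2 h3 h4
      simp [hmv, basicMove, h1, h2, h3, h4]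
    have key : ∀ p, 0 ≤ (n' p : ℤ) + mv p := by
      intro p
      rcases eq_or_ne p (i, j) with rfl | h1
      · rw [hmv1]; omega
      rcases eq_or_ne p (i', j') with rfl | h2
      · rw [hmv2]; omega
      rcases eq_or_ne p (i, j') with rfl | h3
      · rw [hmv3]; omega
      rcases eq_or_ne p (i', j) with rfl | h4
      · rw [hmv4]; omega
      · rw [hmv0 p h1 h2 h3 h4]; omega
    set N : Fin k × Fin k → ℕ := fun p => ((n' p : ℤ) + mv p).toNat with hNdef
    have hN : ∀ p, (N p : ℤ) = (n' p : ℤ) + mv p := fun p => Int.toNat_of_nonneg (key p)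
    -- row and column sums of mv vanish
    have hite : ∀ (a b : Fin k) (i0 : Fin k),
        ∑ j0 : Fin k, (if (i0, j0) = (a, b) then (1:ℤ) else 0) = if i0 = a then 1 else 0 := by
      intro a b i0
      rcases eq_or_ne i0 a with rfl | h
      · simp [Prod.mk.injEq]
      · simp [Prod.mk.injEq, h]
    have hite' : ∀ (a b : Fin k) (j0 : Fin k),
        ∑ i0 : Fin k, (if (i0, j0) = (a, b) then (1:ℤ) else 0) = if j0 = b then 1 else 0 := by
      intro a b j0
      rcases eq_or_ne j0 b with rfl | h
      · simp [Prod.mk.injEq]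
      · simp [Prod.mk.injEq, h]
    have hrowmv : ∀ i0 : Fin k, ∑ j0, mv (i0, j0) = 0 := by
      intro i0
      simp only [hmv, basicMove]
      rw [Finset.sum_sub_distrib, Finset.sum_sub_distrib, Finset.sum_add_distrib,
        hite, hite, hite, hite]
      ring
    have hcolmv : ∀ j0 : Fin k, ∑ i0, mv (i0, j0) = 0 := by
      intro j0
      simp only [hmv, basicMove]
      rw [Finset.sum_sub_distrib, Finset.sum_sub_distrib, Finset.sum_add_distrib,
        hite', hite', hite', hite']
      ring
    -- margins of N
    have hrowN : ∀ i0 : Fin k, ∑ j0, N (i0, j0) = ∑ j0, n'' (i0, j0) := by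
      intro i0
      have : ((∑ j0, N (i0, j0) : ℕ) : ℤ) = ((∑ j0, n'' (i0, j0) : ℕ) : ℤ) := by
        push_cast
        simp only [hN, Finset.sum_add_distrib, hrowmv i0, add_zero]
        have := hrow i0
        exact_mod_cast congrArg (Nat.cast : ℕ → ℤ) this
      exact_mod_cast this
    have hcolN : ∀ j0 : Fin k, ∑ i0, N (i0, j0) = ∑ i0, n'' (i0, j0) := by
      intro j0
      have : ((∑ i0, N (i0, j0) : ℕ) : ℤ) = ((∑ i0, n'' (i0, j0) : ℕ) : ℤ) := by
        push_cast
        simp only [hN, Finset.sum_add_distrib, hcolmv j0, add_zero]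
        exact_mod_cast congrArg (Nat.cast : ℕ → ℤ) (hcol j0)
      exact_mod_cast this
    -- measure decreases
    set S : Finset (Fin k × Fin k) := {(i, j), (i', j'), (i, j'), (i', j)} with hS
    have hnotmem1 : (i, j) ∉ ({(i', j'), (i, j'), (i', j)} : Finset (Fin k × Fin k)) := by
      simp [Prod.mk.injEq, hii', hjj']
    have hnotmem2 : (i', j') ∉ ({(i, j'), (i', j)} : Finset (Fin k × Fin k)) := by
      simp [Prod.mk.injEq, hii'.symm, hjj'.symm]
    have hnotmem3 : (i, j') ∉ ({(i', j)} : Finset (Fin k × Fin k)) := by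
      simp [Prod.mk.injEq, hii', hjj'.symm]
    set dN : ℕ := ∑ p : Fin k × Fin k, ((n'' p : ℤ) - N p).natAbs with hdN
    have hdlt : dN < d := by
      rw [← hd]
      have hsplit1 : ∑ p ∈ Finset.univ \ S, ((n'' p : ℤ) - N p).natAbs + ∑ p ∈ S, ((n'' p : ℤ) - N p).natAbs
          = ∑ p : Fin k × Fin k, ((n'' p : ℤ) - N p).natAbs := Finset.sum_sdiff (Finset.subset_univ S)
      have hsplit2 : ∑ p ∈ Finset.univ \ S, ((n'' p : ℤ) - n' p).natAbs + ∑ p ∈ S, ((n'' p : ℤ) - n' p).natAbs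
          = ∑ p : Fin k × Fin k, ((n'' p : ℤ) - n' p).natAbs := Finset.sum_sdiff (Finset.subset_univ S)
      have hsame : ∑ p ∈ Finset.univ \ S, ((n'' p : ℤ) - N p).natAbs
          = ∑ p ∈ Finset.univ \ S, ((n'' p : ℤ) - n' p).natAbs := by
        apply Finset.sum_congr rfl
        intro p hp
        simp only [Finset.mem_sdiff, hS, Finset.mem_insert, Finset.mem_singleton] at hp
        push_neg at hp
        rw [hN p, hmv0 p hp.2.1 hp.2.2.1 hp.2.2.2.1 hp.2.2.2.2]
        ring_nf
      have hsum4N : ∑ p ∈ S, ((n'' p : ℤ) - N p).natAbs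
          = ((n'' (i,j) : ℤ) - N (i,j)).natAbs + (((n'' (i',j') : ℤ) - N (i',j')).natAbs
            + (((n'' (i,j') : ℤ) - N (i,j')).natAbs + ((n'' (i',j) : ℤ) - N (i',j)).natAbs)) := by
        rw [hS, Finset.sum_insert hnotmem1, Finset.sum_insert hnotmem2,
          Finset.sum_insert hnotmem3, Finset.sum_singleton]
      have hsum4 : ∑ p ∈ S, ((n'' p : ℤ) - n' p).natAbs
          = ((n'' (i,j) : ℤ) - n' (i,j)).natAbs + (((n'' (i',j') : ℤ) - n' (i',j')).natAbs
            + (((n'' (i,j') : ℤ) - n' (i,j')).natAbs + ((n'' (i',j) : ℤ) - n' (i',j)).natAbs)) := by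
        rw [hS, Finset.sum_insert hnotmem1, Finset.sum_insert hnotmem2,
          Finset.sum_insert hnotmem3, Finset.sum_singleton]
      have e1 := hN (i, j); rw [hmv1] at e1
      have e2 := hN (i', j'); rw [hmv2] at e2
      have e3 := hN (i, j'); rw [hmv3] at e3
      have e4 := hN (i', j); rw [hmv4] at e4
      omega
    obtain ⟨Q₀, m', hbasic, htot, hpart⟩ := IH dN hdlt N n'' rfl hrowN hcolN
    refine ⟨Q₀ + 1, Fin.cons mv m', ?_, ?_, ?_⟩
    · intro t
      refine Fin.cases ?_ ?_ t
      · exact ⟨i, i', j', j, hii', hjj'.symm, by simp [hmv]⟩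
      · intro t0; simpa using hbasic t0
    · intro p
      rw [Fin.sum_univ_succ]
      simp only [Fin.cons_zero, Fin.cons_succ]
      have := htot p
      rw [hN p] at this
      linarith
    · intro q hq p
      cases q with
      | zero => simp
      | succ q₁ =>
        rw [sum_filter_succ]
        simp only [Fin.cons_zero, Fin.cons_succ]
        have hfil : Finset.univ.filter (fun t : Fin Q₀ => (t : ℕ) < q₁)
            = Finset.univ.filter (fun t : Fin Q₀ => (t : ℕ) < min q₁ Q₀) := by
          apply Finset.filter_congr
          intro t _
          have := t.isLt
          omega
        have hp := hpart (min q₁ Q₀) (min_le_right _ _) p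
        rw [hN p] at hp
        rw [hfil]
        linarith

/-- The set of basic moves is a Markov basis for two-way tables with fixed margins:
for any two nonnegative integer `k×k` tables `n'` and `n''` with the same row sums
and the same column sums, there is a finite sequence of basic moves whose total sum
takes `n'` to `n''` and all of whose partial sums applied to `n'` stay entrywise
nonnegative. -/
theorem basicMoves_markov_basis {k : ℕ} (n' n'' : Fin k × Fin k → ℕ)
    (hrow : ∀ i : Fin k, ∑ j : Fin k, n' (i, j) = ∑ j : Fin k, n'' (i, j))
    (hcol : ∀ j : Fin k, ∑ i : Fin k, n' (i, j) = ∑ i : Fin k, n'' (i, j)) :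
    ∃ (Q : ℕ) (m : Fin Q → (Fin k × Fin k → ℤ)),
      (∀ t : Fin Q, IsBasicMove (m t)) ∧
      (∀ p : Fin k × Fin k, (n'' p : ℤ) = (n' p : ℤ) + ∑ t : Fin Q, m t p) ∧
      (∀ q : ℕ, q ≤ Q → ∀ p : Fin k × Fin k,
        0 ≤ (n' p : ℤ) + ∑ t ∈ Finset.univ.filter (fun t : Fin Q => (t : ℕ) < q), m t p) := by
  exact markov_aux _ n' n'' rfl hrow hcol
end

section
/- Under a distance weighting scheme, the basic move with +1 at cells (i,h) and (j,j) and -1 at cells (i,j) and (j,h), for i < j < h, does not decrease the observed agreement: A_{o,w}(n+m) ≥ A_{o,w}(n), provided n(i,j) > 0 and n(j,h) > 0. The change equals (1/N)(u(i,j) + u(j,h) - u(i,h)) ≥ 0. -/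
/-- Under a distance weighting scheme (disagreement weights `u` with `u(i,i) = 0`
satisfying the triangle inequality), the basic move with `+1` at `(i,h)` and
`(j,j)` and `-1` at `(i,j)` and `(j,h)`, for `i < j < h`, does not decrease the
observed agreement: the change equals `(1/N)(u(i,j) + u(j,h) - u(i,h)) ≥ 0`. -/
theorem distance_weights_move_increases_agreement {k : ℕ}
    (n : Fin k × Fin k → ℕ) (N : ℕ) (hN : 0 < N)
    (htot : ∑ p : Fin k × Fin k, n p = N)
    (u : Fin k → Fin k → ℝ)
    (hdiag : ∀ a, u a a = 0)
    (htri : ∀ a b c : Fin k, u a c ≤ u a b + u b c)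
    (i j h : Fin k) (hij : i < j) (hjh : j < h)
    (hpos1 : 0 < n (i, j)) (hpos2 : 0 < n (j, h)) :
    let m : Fin k × Fin k → ℤ := fun p =>
      (if p = (i, h) then 1 else 0) + (if p = (j, j) then 1 else 0)
        - (if p = (i, j) then 1 else 0) - (if p = (j, h) then 1 else 0)
    let A : (Fin k × Fin k → ℤ) → ℝ := fun x =>
      1 - (∑ p : Fin k × Fin k, u p.1 p.2 * (x p : ℝ)) / (N : ℝ)
    A (fun p => (n p : ℤ) + m p) - A (fun p => (n p : ℤ))
        = (1 / (N : ℝ)) * (u i j + u j h - u i h) ∧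
      A (fun p => (n p : ℤ) + m p) ≥ A (fun p => (n p : ℤ)) := by
  intro m A
  have hNpos : (0:ℝ) < N := by exact_mod_cast hN
  have key : A (fun p => (n p : ℤ) + m p) - A (fun p => (n p : ℤ))
      = (1 / (N : ℝ)) * (u i j + u j h - u i h) := by
    show (1 - (∑ p : Fin k × Fin k, u p.1 p.2 * (((n p : ℤ) + m p : ℤ) : ℝ)) / (N : ℝ))
        - (1 - (∑ p : Fin k × Fin k, u p.1 p.2 * ((n p : ℤ) : ℝ)) / (N : ℝ))
        = (1 / (N : ℝ)) * (u i j + u j h - u i h)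
    have split : (∑ p : Fin k × Fin k, u p.1 p.2 * (((n p : ℤ) + m p : ℤ) : ℝ))
        = (∑ p : Fin k × Fin k, u p.1 p.2 * ((n p : ℤ) : ℝ))
          + (∑ p : Fin k × Fin k, u p.1 p.2 * ((m p : ℤ) : ℝ)) := by
      rw [← Finset.sum_add_distrib]
      congr 1; ext p; push_cast; ring
    rw [split]
    have hm : (∑ p : Fin k × Fin k, u p.1 p.2 * ((m p : ℤ) : ℝ))
        = u i h - u i j - u j h := by
      simp only [m]
      push_cast
      simp only [mul_add, mul_sub, Finset.sum_add_distrib, Finset.sum_sub_distrib,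
        mul_ite, mul_one, mul_zero, Finset.sum_ite_eq', Finset.mem_univ, if_true]
      rw [hdiag j]
      ring
    rw [hm]
    field_simp
    ring
  have hnn : 0 ≤ u i j + u j h - u i h := by
    have := htri i j h; linarith
  refine ⟨key, ?_⟩
  rw [ge_iff_le, ← sub_nonneg, key]
  positivity
end

section
/- Under linear weights, one-sided basic moves preserve the weighted kappa: with i1 < i2 ≤ j1 < j2 and the basic move m as above, the tables n and n + m have the same row sums, the same column sums, and the same weighted kappa κ_l, where κ_l(n) = 1 - (Σ_{i≠j} u(i,j) n(i,j)/N) / (Σ_{i≠j} u(i,j) (n_{i+}/N)(n_{+j}/N)) with linear u. -/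
/-- Under linear weights, one-sided basic moves preserve the weighted kappa: for
`i₁ < i₂ ≤ j₁ < j₂` and the basic move `m` with `+1` at `(i₁,j₁)`, `(i₂,j₂)` and
`-1` at `(i₁,j₂)`, `(i₂,j₁)`, the tables `n` and `n + m` have the same row sums,
the same column sums, and the same weighted kappa `κ_l`. -/
theorem linear_weights_one_sided_move_kappa_invariant {k : ℕ}
    (n : Fin k × Fin k → ℕ) (N : ℕ) (hN : 0 < N)
    (htot : ∑ p : Fin k × Fin k, n p = N)
    (i₁ i₂ j₁ j₂ : Fin k) (h12 : i₁ < i₂) (h2j : i₂ ≤ j₁) (hj12 : j₁ < j₂)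
    (hpos1 : 0 < n (i₁, j₂)) (hpos2 : 0 < n (i₂, j₁)) :
    let u : Fin k → Fin k → ℝ := fun a b => |(a : ℝ) - (b : ℝ)| / ((k : ℝ) - 1)
    let m : Fin k × Fin k → ℤ := fun p =>
      (if p = (i₁, j₁) then 1 else 0) + (if p = (i₂, j₂) then 1 else 0)
        - (if p = (i₁, j₂) then 1 else 0) - (if p = (i₂, j₁) then 1 else 0)
    let row : (Fin k × Fin k → ℤ) → Fin k → ℤ := fun x a => ∑ b : Fin k, x (a, b)
    let col : (Fin k × Fin k → ℤ) → Fin k → ℤ := fun x b => ∑ a : Fin k, x (a, b)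
    let κ : (Fin k × Fin k → ℤ) → ℝ := fun x =>
      1 - (∑ p ∈ Finset.univ.filter (fun p : Fin k × Fin k => p.1 ≠ p.2),
              u p.1 p.2 * (x p : ℝ)) /
          ((N : ℝ) * ∑ p ∈ Finset.univ.filter (fun p : Fin k × Fin k => p.1 ≠ p.2),
              u p.1 p.2 * ((row x p.1 : ℝ) / (N : ℝ)) * ((col x p.2 : ℝ) / (N : ℝ)))
    let n' : Fin k × Fin k → ℤ := fun p => (n p : ℤ) + m p
    ((N : ℝ) * ∑ p ∈ Finset.univ.filter (fun p : Fin k × Fin k => p.1 ≠ p.2),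
        u p.1 p.2 * ((row (fun q => (n q : ℤ)) p.1 : ℝ) / (N : ℝ))
          * ((col (fun q => (n q : ℤ)) p.2 : ℝ) / (N : ℝ))) ≠ 0 →
    (∀ a : Fin k, row n' a = row (fun q => (n q : ℤ)) a) ∧
    (∀ b : Fin k, col n' b = col (fun q => (n q : ℤ)) b) ∧
    κ n' = κ (fun q => (n q : ℤ)) := by
  intro u m row col κ n' hden
  have hsum1 : ∀ a c d : Fin k,
      (∑ b : Fin k, if (a, b) = (c, d) then (1 : ℤ) else 0)
        = if a = c then 1 else 0 := by
    intro a c d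
    rcases eq_or_ne a c with h | h
    · subst h; simp [Prod.ext_iff]
    · simp [Prod.ext_iff, h]
  have hsum2 : ∀ b c d : Fin k,
      (∑ a : Fin k, if (a, b) = (c, d) then (1 : ℤ) else 0)
        = if b = d then 1 else 0 := by
    intro b c d
    rcases eq_or_ne b d with h | h
    · subst h; simp [Prod.ext_iff]
    · simp [Prod.ext_iff, h]
  have hmrow : ∀ a : Fin k, (∑ b : Fin k, m (a, b)) = 0 := by
    intro a
    simp only [m, Finset.sum_sub_distrib, Finset.sum_add_distrib, hsum1]
    ring
  have hmcol : ∀ b : Fin k, (∑ a : Fin k, m (a, b)) = 0 := by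
    intro b
    simp only [m, Finset.sum_sub_distrib, Finset.sum_add_distrib, hsum2]
    rcases eq_or_ne b j₁ with h | h <;> rcases eq_or_ne b j₂ with h' | h' <;>
      simp [h, h']
  have hrow : ∀ a : Fin k, row n' a = row (fun q => (n q : ℤ)) a := by
    intro a
    simp only [row, n', Finset.sum_add_distrib, hmrow a, add_zero]
  have hcol : ∀ b : Fin k, col n' b = col (fun q => (n q : ℤ)) b := by
    intro b
    simp only [col, n', Finset.sum_add_distrib, hmcol b, add_zero]
  refine ⟨hrow, hcol, ?_⟩
  -- denominators agree
  have hDen :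
      (∑ p ∈ Finset.univ.filter (fun p : Fin k × Fin k => p.1 ≠ p.2),
          u p.1 p.2 * ((row n' p.1 : ℝ) / (N : ℝ)) * ((col n' p.2 : ℝ) / (N : ℝ)))
        = ∑ p ∈ Finset.univ.filter (fun p : Fin k × Fin k => p.1 ≠ p.2),
          u p.1 p.2 * ((row (fun q => (n q : ℤ)) p.1 : ℝ) / (N : ℝ))
            * ((col (fun q => (n q : ℤ)) p.2 : ℝ) / (N : ℝ)) := by
    refine Finset.sum_congr rfl fun p _ => ?_
    rw [hrow p.1, hcol p.2]
  -- numerators agree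
  have habs : ∀ a b : Fin k, a ≤ b → |(a : ℝ) - (b : ℝ)| = (b : ℝ) - (a : ℝ) := by
    intro a b h
    rw [abs_sub_comm, abs_of_nonneg]
    exact sub_nonneg.2 (by exact_mod_cast (Fin.le_def.mp h))
  have hNum :
      (∑ p ∈ Finset.univ.filter (fun p : Fin k × Fin k => p.1 ≠ p.2),
          u p.1 p.2 * (n' p : ℝ))
        = ∑ p ∈ Finset.univ.filter (fun p : Fin k × Fin k => p.1 ≠ p.2),
          u p.1 p.2 * ((n p : ℤ) : ℝ) := by
    have hsplit :
        (∑ p ∈ Finset.univ.filter (fun p : Fin k × Fin k => p.1 ≠ p.2),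
            u p.1 p.2 * (n' p : ℝ))
          = (∑ p ∈ Finset.univ.filter (fun p : Fin k × Fin k => p.1 ≠ p.2),
              u p.1 p.2 * ((n p : ℤ) : ℝ))
            + ∑ p ∈ Finset.univ.filter (fun p : Fin k × Fin k => p.1 ≠ p.2),
              u p.1 p.2 * ((m p : ℤ) : ℝ) := by
      rw [← Finset.sum_add_distrib]
      refine Finset.sum_congr rfl fun p _ => ?_
      simp only [n']
      push_cast
      ring
    rw [hsplit]
    have hext :
        (∑ p ∈ Finset.univ.filter (fun p : Fin k × Fin k => p.1 ≠ p.2),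
            u p.1 p.2 * ((m p : ℤ) : ℝ))
          = ∑ p : Fin k × Fin k, u p.1 p.2 * ((m p : ℤ) : ℝ) := by
      refine Finset.sum_subset (Finset.filter_subset _ _) ?_
      intro p _ hp
      have hpd : p.1 = p.2 := by
        by_contra h
        exact hp (Finset.mem_filter.mpr ⟨Finset.mem_univ p, h⟩)
      simp [u, hpd]
    rw [hext]
    have hz : (∑ p : Fin k × Fin k, u p.1 p.2 * ((m p : ℤ) : ℝ))
        = u i₁ j₁ + u i₂ j₂ - u i₁ j₂ - u i₂ j₁ := by
      have : ∀ c : Fin k × Fin k,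
          (∑ p : Fin k × Fin k, u p.1 p.2 * (if p = c then (1 : ℝ) else 0))
            = u c.1 c.2 := by
        intro c
        simp [mul_ite]
      simp only [m]
      push_cast
      simp only [mul_add, mul_sub, Finset.sum_add_distrib, Finset.sum_sub_distrib,
        apply_ite (fun z : ℤ => (z : ℝ))]
      push_cast
      rw [this (i₁, j₁), this (i₂, j₂), this (i₁, j₂), this (i₂, j₁)]
    have h11 : u i₁ j₁ + u i₂ j₂ - u i₁ j₂ - u i₂ j₁ = 0 := by
      have e1 := habs i₁ j₁ (le_trans h12.le h2j)
      have e2 := habs i₂ j₂ (le_trans h2j hj12.le)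
      have e3 := habs i₁ j₂ (le_trans h12.le (le_trans h2j hj12.le))
      have e4 := habs i₂ j₁ h2j
      simp only [u, e1, e2, e3, e4]
      ring
    rw [hz, h11, add_zero]
  simp only [κ]
  rw [hDen, hNum]
end

section
/- The two-way marginal projection of a multi-rater basic move onto a pair of coordinates (u,v) is either a two-way basic move or the zero move: it is a basic move exactly when the four projected pairs (i_u,i_v), (i'_u,i'_v), (j_u,j_v), (j'_u,j'_v) are all distinct, and is the zero table otherwise. -/
lemma proj_sum {r k : ℕ} (x x' y y' : Fin r → Fin k) (t v : Fin r) (p : Fin k × Fin k) :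
    (∑ z ∈ Finset.univ.filter (fun z : Fin r → Fin k => z t = p.1 ∧ z v = p.2),
      ((if z = x then (1:ℤ) else 0) + (if z = x' then 1 else 0)
        - (if z = y then 1 else 0) - (if z = y' then 1 else 0)))
    = (if (x t, x v) = p then 1 else 0) + (if (x' t, x' v) = p then 1 else 0)
      - (if (y t, y v) = p then 1 else 0) - (if (y' t, y' v) = p then 1 else 0) := by
  rw [Finset.sum_sub_distrib, Finset.sum_sub_distrib, Finset.sum_add_distrib]
  simp [Finset.sum_ite_eq', Finset.mem_filter, Prod.ext_iff]

lemma basicMove_ne_zero {k : ℕ} {i i' j j' : Fin k} (hi : i ≠ i') (hj : j ≠ j')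
    {P : Fin k × Fin k → ℤ} (hP0 : ∀ p, P p = 0) : P ≠ basicMove i i' j j' := by
  intro h
  have := hP0 (i, j)
  rw [h] at this
  simp [basicMove, Prod.ext_iff, hi, hj] at this

lemma inj4 {α : Type*} {A B C E : α} (h01 : A ≠ B) (h02 : A ≠ C) (h03 : A ≠ E)
    (h12 : B ≠ C) (h13 : B ≠ E) (h23 : C ≠ E) :
    Function.Injective ![A, B, C, E] := by
  intro a b hab
  fin_cases a <;> fin_cases b <;> simp_all

lemma ne_fst {α β : Type*} {a c : α} {b d : β} (h : a ≠ c) : (a, b) ≠ (c, d) :=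
  fun h' => h (congrArg Prod.fst h')

lemma ne_snd {α β : Type*} {a c : α} {b d : β} (h : b ≠ d) : (a, b) ≠ (c, d) :=
  fun h' => h (congrArg Prod.snd h')


/-- The two-way marginal projection of a multi-rater basic move onto a pair of
coordinates `(t, v)` is either a two-way basic move or the zero move: it is a basic
move exactly when the four projected pairs of the `+1` cells `x, x'` and the `-1`
cells `y, y'` are all distinct, and is the zero table otherwise. -/
theorem multirater_basicMove_projection (r k : ℕ) (hr : 2 ≤ r)
    (x x' : Fin r → Fin k)
    (D : Finset (Fin r))
    (hD : D = Finset.univ.filter (fun s => x s ≠ x' s))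
    (hcard : 2 ≤ D.card)
    (S : Finset (Fin r)) (hSD : S ⊆ D) (hSne : S.Nonempty) (hSproper : S ≠ D)
    (t v : Fin r) (htv : t ≠ v) :
    let y : Fin r → Fin k := fun s => if s ∈ S then x s else x' s
    let y' : Fin r → Fin k := fun s => if s ∈ S then x' s else x s
    let m : (Fin r → Fin k) → ℤ := fun z =>
      (if z = x then 1 else 0) + (if z = x' then 1 else 0)
        - (if z = y then 1 else 0) - (if z = y' then 1 else 0)
    let P : Fin k × Fin k → ℤ := fun p =>
      ∑ z ∈ Finset.univ.filter
          (fun z : Fin r → Fin k => z t = p.1 ∧ z v = p.2), m z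
    let pairs : Fin 4 → Fin k × Fin k :=
      ![(x t, x v), (x' t, x' v), (y t, y v), (y' t, y' v)]
    (IsBasicMove P ↔ Function.Injective pairs) ∧
    (¬ Function.Injective pairs → ∀ p : Fin k × Fin k, P p = 0) := by
  intro y y' m P pairs
  have hP : ∀ p, P p =
      (if (x t, x v) = p then 1 else 0) + (if (x' t, x' v) = p then 1 else 0)
      - (if (y t, y v) = p then 1 else 0) - (if (y' t, y' v) = p then 1 else 0) :=
    fun p => proj_sum x x' y y' t v p
  have hp0 : pairs 0 = (x t, x v) := rfl
  have hp1 : pairs 1 = (x' t, x' v) := rfl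
  have hp2 : pairs 2 = (y t, y v) := rfl
  have hp3 : pairs 3 = (y' t, y' v) := rfl
  -- degenerate helper
  have degen : ∀ (a b : Fin 4), a ≠ b → pairs a = pairs b → (∀ p, P p = 0) →
      (IsBasicMove P ↔ Function.Injective pairs) ∧
      (¬ Function.Injective pairs → ∀ p : Fin k × Fin k, P p = 0) := by
    intro a b hab heq hP0
    have hni : ¬ Function.Injective pairs := fun hinj => hab (hinj heq)
    refine ⟨iff_of_false ?_ hni, fun _ => hP0⟩
    rintro ⟨i, i', j, j', hi, hj, hPe⟩
    exact basicMove_ne_zero hi hj hP0 hPe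
  by_cases ht : t ∈ S <;> by_cases hv : v ∈ S
  · -- y = x on t,v ; y' = x' on t,v
    have hC : (y t, y v) = (x t, x v) := by simp [y, ht, hv]
    have hE : (y' t, y' v) = (x' t, x' v) := by simp [y', ht, hv]
    refine degen 0 2 (by decide) (by rw [hp0, hp2, hC]) ?_
    intro p; rw [hP, hC, hE]; ring
  · -- t ∈ S, v ∉ S : C = (x t, x' v), E = (x' t, x v)
    have hC : (y t, y v) = (x t, x' v) := by simp [y, ht, hv]
    have hE : (y' t, y' v) = (x' t, x v) := by simp [y', ht, hv]
    by_cases h1 : x t = x' t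
    · refine degen 0 3 (by decide) (by rw [hp0, hp3, hE, h1]) ?_
      intro p; rw [hP, hC, hE, h1]; ring
    · by_cases h2 : x v = x' v
      · refine degen 0 2 (by decide) (by rw [hp0, hp2, hC, h2]) ?_
        intro p; rw [hP, hC, hE, h2]; ring
      · have hinj : Function.Injective pairs := by
          rw [show pairs = ![(x t, x v), (x' t, x' v), (y t, y v), (y' t, y' v)] from rfl, hC, hE]
          exact inj4 (ne_fst h1) (ne_snd h2) (ne_fst h1) (ne_fst (Ne.symm h1)) (ne_snd (Ne.symm h2)) (ne_fst h1)
        refine ⟨iff_of_true ?_ hinj, fun h => absurd hinj h⟩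
        refine ⟨x t, x' t, x v, x' v, h1, h2, funext fun p => ?_⟩
        rw [hP, hC, hE]
        simp only [basicMove, eq_comm]
        try ring
  · -- t ∉ S, v ∈ S : C = (x' t, x v), E = (x t, x' v)
    have hC : (y t, y v) = (x' t, x v) := by simp [y, ht, hv]
    have hE : (y' t, y' v) = (x t, x' v) := by simp [y', ht, hv]
    by_cases h1 : x t = x' t
    · refine degen 0 2 (by decide) (by rw [hp0, hp2, hC, h1]) ?_
      intro p; rw [hP, hC, hE, h1]; ring
    · by_cases h2 : x v = x' v
      · refine degen 0 3 (by decide) (by rw [hp0, hp3, hE, h2]) ?_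
        intro p; rw [hP, hC, hE, h2]; ring
      · have hinj : Function.Injective pairs := by
          rw [show pairs = ![(x t, x v), (x' t, x' v), (y t, y v), (y' t, y' v)] from rfl, hC, hE]
          exact inj4 (ne_fst h1) (ne_fst h1) (ne_snd h2) (ne_snd (Ne.symm h2)) (ne_fst (Ne.symm h1)) (ne_fst (Ne.symm h1))
        refine ⟨iff_of_true ?_ hinj, fun h => absurd hinj h⟩
        refine ⟨x t, x' t, x v, x' v, h1, h2, funext fun p => ?_⟩
        rw [hP, hC, hE]
        simp only [basicMove, eq_comm]
        try ring
  · -- t ∉ S, v ∉ S : C = B, E = A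
    have hC : (y t, y v) = (x' t, x' v) := by simp [y, ht, hv]
    have hE : (y' t, y' v) = (x t, x v) := by simp [y', ht, hv]
    refine degen 0 3 (by decide) (by rw [hp0, hp3, hE]) ?_
    intro p; rw [hP, hC, hE]; ring
end

section
/- In the multi-rater setting, a diagonal basic move does not decrease the multi-rater observed agreement: if m is a basic move with +1 at the diagonal cells (i,i,...,i) and (j,j,...,j) with i ≠ j, and n + m is entrywise nonnegative, then A_{o,w}(n+m) ≥ A_{o,w}(n). -/
/-- In the multi-rater setting, a diagonal basic move (with `+1` at the diagonal
cells `(i,...,i)` and `(j,...,j)`, `i ≠ j`) does not decrease the pairwise weighted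
observed agreement, provided `n + m` is entrywise nonnegative. -/
theorem multirater_diagonal_move_increases_agreement (r k : ℕ) (hr : 2 ≤ r)
    (i j : Fin k) (hij : i ≠ j)
    (S : Finset (Fin r)) (hSne : S.Nonempty) (hSproper : S ≠ Finset.univ)
    (n : (Fin r → Fin k) → ℕ) (N : ℕ) (hN : 0 < N)
    (htot : ∑ z : Fin r → Fin k, n z = N)
    (w : Fin k → Fin k → ℝ)
    (hdiag : ∀ a, w a a = 1)
    (hle : ∀ a b, w a b ≤ 1) :
    let x : Fin r → Fin k := fun _ => i
    let x' : Fin r → Fin k := fun _ => j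
    let y : Fin r → Fin k := fun s => if s ∈ S then x s else x' s
    let y' : Fin r → Fin k := fun s => if s ∈ S then x' s else x s
    let m : (Fin r → Fin k) → ℤ := fun z =>
      (if z = x then 1 else 0) + (if z = x' then 1 else 0)
        - (if z = y then 1 else 0) - (if z = y' then 1 else 0)
    let A : ((Fin r → Fin k) → ℤ) → ℝ := fun tab =>
      (2 / ((r : ℝ) * ((r : ℝ) - 1))) *
        ∑ uv ∈ Finset.univ.filter (fun uv : Fin r × Fin r => uv.1 < uv.2),
          (1 / (N : ℝ)) * ∑ a : Fin k, ∑ b : Fin k, w a b *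
            ((∑ z ∈ Finset.univ.filter
                (fun z : Fin r → Fin k => z uv.1 = a ∧ z uv.2 = b), tab z : ℤ) : ℝ)
    (∀ z : Fin r → Fin k, 0 ≤ (n z : ℤ) + m z) →
    A (fun z => (n z : ℤ) + m z) ≥ A (fun z => (n z : ℤ)) := by
  intro x x' y y' m A _hpos
  -- A is additive
  have hadd : A (fun z => (n z : ℤ) + m z) = A (fun z => (n z : ℤ)) + A m := by
    simp only [A, Finset.sum_add_distrib, Int.cast_add, mul_add]
  rw [hadd]
  have hAm : 0 ≤ A m := by
    have hc : (0:ℝ) ≤ 2 / ((r : ℝ) * ((r : ℝ) - 1)) := by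
      have h2 : (2:ℝ) ≤ (r:ℝ) := by exact_mod_cast hr
      have hpos : (0:ℝ) < (r : ℝ) * ((r : ℝ) - 1) :=
        mul_pos (by linarith) (by linarith)
      positivity
    apply mul_nonneg hc
    apply Finset.sum_nonneg
    intro uv _
    apply mul_nonneg (by positivity)
    -- compute the margin of m
    have hm : ∀ (a b : Fin k),
        (∑ z ∈ Finset.univ.filter (fun z : Fin r → Fin k => z uv.1 = a ∧ z uv.2 = b), m z) =
        ((if x uv.1 = a ∧ x uv.2 = b then 1 else 0) + (if x' uv.1 = a ∧ x' uv.2 = b then 1 else 0)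
          - (if y uv.1 = a ∧ y uv.2 = b then 1 else 0)
          - (if y' uv.1 = a ∧ y' uv.2 = b then 1 else 0) : ℤ) := by
      intro a b
      simp only [m, Finset.sum_sub_distrib, Finset.sum_add_distrib]
      simp [Finset.sum_ite_eq', Finset.mem_filter]
    have hone : ∀ (c d : Fin k),
        ∑ a : Fin k, ∑ b : Fin k, w a b * (if c = a ∧ d = b then (1:ℝ) else 0) = w c d := by
      intro c d
      simp [ite_and, mul_ite, mul_one, mul_zero, Finset.sum_ite_eq]
    have key : ∑ a : Fin k, ∑ b : Fin k, w a b *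
        ((∑ z ∈ Finset.univ.filter
            (fun z : Fin r → Fin k => z uv.1 = a ∧ z uv.2 = b), m z : ℤ) : ℝ)
        = w (x uv.1) (x uv.2) + w (x' uv.1) (x' uv.2)
          - w (y uv.1) (y uv.2) - w (y' uv.1) (y' uv.2) := by
      have : ∀ (a b : Fin k), w a b *
          ((∑ z ∈ Finset.univ.filter
              (fun z : Fin r → Fin k => z uv.1 = a ∧ z uv.2 = b), m z : ℤ) : ℝ)
          = w a b * (if x uv.1 = a ∧ x uv.2 = b then (1:ℝ) else 0)
            + w a b * (if x' uv.1 = a ∧ x' uv.2 = b then (1:ℝ) else 0)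
            - w a b * (if y uv.1 = a ∧ y uv.2 = b then (1:ℝ) else 0)
            - w a b * (if y' uv.1 = a ∧ y' uv.2 = b then (1:ℝ) else 0) := by
        intro a b
        rw [hm a b]
        push_cast
        ring
      simp only [this, Finset.sum_sub_distrib, Finset.sum_add_distrib, hone]
    rw [key]
    have h1 : w (x uv.1) (x uv.2) = 1 := by simp [x, hdiag]
    have h2 : w (x' uv.1) (x' uv.2) = 1 := by simp [x', hdiag]
    have h3 : w (y uv.1) (y uv.2) ≤ 1 := hle _ _
    have h4 : w (y' uv.1) (y' uv.2) ≤ 1 := hle _ _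
    linarith
  linarith
end
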